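/- Let W = ℝ^n with its standard inner product, n ≥ 2. Let R^{2,1} ⊆ W^* ⊗ Λ²W^* denote the kernel of complete antisymmetrization, i.e. the space of trilinear maps c : W × W × W → ℝ that are antisymmetric in the last two arguments and satisfy the cyclic identity c(w₁, w₂, w₃) + c(w₂, w₃, w₁) + c(w₃, w₁, w₂) = 0. Then: (1) dim R^{2,1} = (n³ − n)/3; (2) for each γ ∈ W^* the map c_γ(w, w₁, w₂) := γ(w₁)⟨w₂, w⟩ − γ(w₂)⟨w₁, w⟩ belongs to R^{2,1}, and γ ↦ c_γ is an injective linear map W^* → R^{2,1}; (3) the quotient R^{2,1}/{c_γ : γ ∈ W^*} has dimension (n³ − 4n)/3. -/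

import Mathlib

open Module Matrix

/-- The space `R^{2,1} ⊆ W^* ⊗ Λ²W^*`: trilinear forms on `W = ℝ^n` that are antisymmetric
in the last two arguments and have vanishing complete antisymmetrization (cyclic identity). -/
noncomputable def R21 (n : ℕ) :
    Submodule ℝ (MultilinearMap ℝ (fun _ : Fin 3 => (Fin n → ℝ)) ℝ) where
  carrier := {c | (∀ w w₁ w₂, c ![w, w₁, w₂] = - c ![w, w₂, w₁]) ∧
      ∀ w₁ w₂ w₃, c ![w₁, w₂, w₃] + c ![w₂, w₃, w₁] + c ![w₃, w₁, w₂] = 0}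
  add_mem' := by
    rintro a b ⟨ha₁, ha₂⟩ ⟨hb₁, hb₂⟩
    refine ⟨fun w w₁ w₂ => ?_, fun w₁ w₂ w₃ => ?_⟩ <;> simp only [MultilinearMap.add_apply]
    · linear_combination ha₁ w w₁ w₂ + hb₁ w w₁ w₂
    · linear_combination ha₂ w₁ w₂ w₃ + hb₂ w₁ w₂ w₃
  zero_mem' := by
    refine ⟨fun w w₁ w₂ => ?_, fun w₁ w₂ w₃ => ?_⟩ <;> simp
  smul_mem' := by
    rintro t a ⟨ha₁, ha₂⟩
    refine ⟨fun w w₁ w₂ => ?_, fun w₁ w₂ w₃ => ?_⟩ <;>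
      simp only [MultilinearMap.smul_apply, smul_eq_mul]
    · linear_combination t * ha₁ w w₁ w₂
    · linear_combination t * ha₂ w₁ w₂ w₃

namespace R21Aux

variable {n : ℕ}

lemma eta3 {α : Type*} (w : Fin 3 → α) : ![w 0, w 1, w 2] = w := by
  funext t; fin_cases t <;> rfl

/-- Index type for coordinates. -/
abbrev ι (n : ℕ) := Fin n × Fin n × Fin n

abbrev MM (n : ℕ) := MultilinearMap ℝ (fun _ : Fin 3 => (Fin n → ℝ)) ℝ

lemma ext3 {f g : MM n} (h : ∀ w w₁ w₂, f ![w, w₁, w₂] = g ![w, w₁, w₂]) : f = g := by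
  refine MultilinearMap.ext fun v => ?_
  rw [← eta3 v]; exact h _ _ _

/-- From coordinates to multilinear map. -/
noncomputable def Lift : ((ι n) → ℝ) →ₗ[ℝ] MM n where
  toFun a := ∑ x : ι n, a x •
    ((MultilinearMap.mkPiAlgebra ℝ (Fin 3) ℝ).compLinearMap
      ![LinearMap.proj x.1, LinearMap.proj x.2.1, LinearMap.proj x.2.2])
  map_add' a b := by simp [add_smul, Finset.sum_add_distrib]
  map_smul' t a := by simp [smul_smul, Finset.smul_sum]

lemma Lift_apply (a : (ι n) → ℝ) (w w₁ w₂ : Fin n → ℝ) :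
    Lift a ![w, w₁, w₂] = ∑ x : ι n, a x * (w x.1 * w₁ x.2.1 * w₂ x.2.2) := by
  simp only [Lift, LinearMap.coe_mk, AddHom.coe_mk, MultilinearMap.sum_apply,
    MultilinearMap.smul_apply, MultilinearMap.compLinearMap_apply,
    MultilinearMap.mkPiAlgebra_apply, smul_eq_mul, Fin.prod_univ_three,
    Matrix.cons_val_zero, Matrix.cons_val_one, Matrix.head_cons, Matrix.cons_val_two,
    Matrix.tail_cons, LinearMap.proj_apply]

lemma Lift_single (a : (ι n) → ℝ) (i j k : Fin n) :
    Lift a ![Pi.single i (1:ℝ), Pi.single j 1, Pi.single k 1] = a (i, j, k) := by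
  rw [Lift_apply]
  simp only [Fintype.sum_prod_type, Pi.single_apply, mul_ite, mul_one, mul_zero, ite_and]
  simp [Finset.sum_ite_eq', Finset.sum_ite_eq]

/-- Coordinates of a multilinear map. -/
noncomputable def Coef : MM n →ₗ[ℝ] ((ι n) → ℝ) where
  toFun c := fun x => c ![Pi.single x.1 (1:ℝ), Pi.single x.2.1 1, Pi.single x.2.2 1]
  map_add' a b := by funext x; simp
  map_smul' t a := by funext x; simp

lemma Coef_Lift (a : (ι n) → ℝ) : Coef (Lift a) = a := by
  funext x
  simp only [Coef, LinearMap.coe_mk, AddHom.coe_mk]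
  rw [Lift_single]

lemma Lift_Coef (c : MM n) : Lift (Coef c) = c := by
  apply Basis.ext_multilinear (fun _ => Pi.basisFun ℝ (Fin n))
  intro v
  have h1 : (fun i => Pi.basisFun ℝ (Fin n) (v i)) =
      ![Pi.single (v 0) (1:ℝ), Pi.single (v 1) 1, Pi.single (v 2) 1] := by
    funext t; fin_cases t <;> simp
  rw [h1, Lift_single]
  simp only [Coef, LinearMap.coe_mk, AddHom.coe_mk]

/-- The coordinate equivalence. -/
noncomputable def E : MM n ≃ₗ[ℝ] ((ι n) → ℝ) :=
  LinearEquiv.ofLinear Coef Lift (LinearMap.ext Coef_Lift) (LinearMap.ext Lift_Coef)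

lemma mem_R21_iff {c : MM n} : c ∈ R21 n ↔
    (∀ w w₁ w₂, c ![w, w₁, w₂] = - c ![w, w₂, w₁]) ∧
      ∀ w₁ w₂ w₃, c ![w₁, w₂, w₃] + c ![w₂, w₃, w₁] + c ![w₃, w₁, w₂] = 0 := Iff.rfl

/-- coordinate conditions imply membership -/
lemma mem_R21_of_coef {c : MM n}
    (h1 : ∀ i j k : Fin n, c ![Pi.single i (1:ℝ), Pi.single j 1, Pi.single k 1]
      = - c ![Pi.single i 1, Pi.single k 1, Pi.single j 1])
    (h2 : ∀ i j k : Fin n, c ![Pi.single i (1:ℝ), Pi.single j 1, Pi.single k 1]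
      + c ![Pi.single j 1, Pi.single k 1, Pi.single i 1]
      + c ![Pi.single k 1, Pi.single i 1, Pi.single j 1] = 0) : c ∈ R21 n := by
  constructor
  · -- antisymmetry
    have key : c + c.domDomCongr (Equiv.swap 1 2) = 0 := by
      apply Basis.ext_multilinear (fun _ => Pi.basisFun ℝ (Fin n))
      intro v
      simp only [MultilinearMap.add_apply, MultilinearMap.domDomCongr_apply,
        MultilinearMap.zero_apply, Pi.basisFun_apply]
      have e1 : (fun i => Pi.single (v i) (1:ℝ)) =
          ![Pi.single (v 0) (1:ℝ), Pi.single (v 1) 1, Pi.single (v 2) 1] := (eta3 _).symm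
      have e2 : (fun i => Pi.single (v (Equiv.swap 1 2 i)) (1:ℝ)) =
          ![Pi.single (v 0) (1:ℝ), Pi.single (v 2) 1, Pi.single (v 1) 1] := by
        funext t; fin_cases t <;> simp [Equiv.swap_apply_def]
      rw [e1, e2]
      linear_combination h1 (v 0) (v 1) (v 2)
    intro w w₁ w₂
    have hk := congrArg (fun f => f ![w, w₁, w₂]) key
    simp only [MultilinearMap.add_apply, MultilinearMap.domDomCongr_apply,
      MultilinearMap.zero_apply] at hk
    have e2 : (fun t => ![w, w₁, w₂] (Equiv.swap 1 2 t)) = ![w, w₂, w₁] := by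
      funext t; fin_cases t <;> simp [Equiv.swap_apply_def]
    rw [e2] at hk
    linarith
  · -- cyclic
    have key : c + c.domDomCongr (finRotate 3) + c.domDomCongr (finRotate 3)⁻¹ = 0 := by
      apply Basis.ext_multilinear (fun _ => Pi.basisFun ℝ (Fin n))
      intro v
      simp only [MultilinearMap.add_apply, MultilinearMap.domDomCongr_apply,
        MultilinearMap.zero_apply, Pi.basisFun_apply]
      have e1 : (fun i => Pi.single (v i) (1:ℝ)) =
          ![Pi.single (v 0) (1:ℝ), Pi.single (v 1) 1, Pi.single (v 2) 1] := (eta3 _).symm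
      have e2 : (fun i => Pi.single (v (finRotate 3 i)) (1:ℝ)) =
          ![Pi.single (v 1) (1:ℝ), Pi.single (v 2) 1, Pi.single (v 0) 1] := by
        funext t; fin_cases t <;> rfl
      have e3 : (fun i => Pi.single (v ((finRotate 3)⁻¹ i)) (1:ℝ)) =
          ![Pi.single (v 2) (1:ℝ), Pi.single (v 0) 1, Pi.single (v 1) 1] := by
        funext t; fin_cases t <;> rfl
      rw [e1, e2, e3]
      linear_combination h2 (v 0) (v 1) (v 2)
    intro w₁ w₂ w₃
    have hk := congrArg (fun f => f ![w₁, w₂, w₃]) key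
    simp only [MultilinearMap.add_apply, MultilinearMap.domDomCongr_apply,
      MultilinearMap.zero_apply] at hk
    have e2 : (fun t => ![w₁, w₂, w₃] (finRotate 3 t)) = ![w₂, w₃, w₁] := by
      funext t; fin_cases t <;> rfl
    have e3 : (fun t => ![w₁, w₂, w₃] ((finRotate 3)⁻¹ t)) = ![w₃, w₁, w₂] := by
      funext t; fin_cases t <;> rfl
    rw [e2, e3] at hk
    linarith

/-- The Young projector onto the hook component, in coordinates. -/
noncomputable def P : ((ι n) → ℝ) →ₗ[ℝ] ((ι n) → ℝ) where
  toFun a := fun x => (1/3) * a x - (1/3) * a (x.1, x.2.2, x.2.1)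
    - (1/6) * a (x.2.1, x.2.2, x.1) - (1/6) * a (x.2.2, x.1, x.2.1)
    + (1/6) * a (x.2.1, x.1, x.2.2) + (1/6) * a (x.2.2, x.2.1, x.1)
  map_add' a b := by funext x; simp only [Pi.add_apply]; ring
  map_smul' t a := by funext x; simp only [Pi.smul_apply, smul_eq_mul, RingHom.id_apply]; ring

lemma P_apply (a : (ι n) → ℝ) (i j k : Fin n) :
    P a (i, j, k) = (1/3) * a (i, j, k) - (1/3) * a (i, k, j)
      - (1/6) * a (j, k, i) - (1/6) * a (k, i, j)
      + (1/6) * a (j, i, k) + (1/6) * a (k, j, i) := rfl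

lemma trace_P : LinearMap.trace ℝ _ (P (n := n)) = (n:ℝ)^3/3 - (n:ℝ)/3 := by
  classical
  rw [LinearMap.trace_eq_matrix_trace ℝ (Pi.basisFun ℝ (ι n))]
  rw [Matrix.trace]
  have hd : ∀ x : ι n, (LinearMap.toMatrix (Pi.basisFun ℝ (ι n)) (Pi.basisFun ℝ (ι n)) P).diag x
      = P (Pi.single x (1:ℝ)) x := by
    intro x
    rw [Matrix.diag_apply, LinearMap.toMatrix_apply]
    simp
  rw [Finset.sum_congr rfl fun x _ => hd x]
  have hv : ∀ x : ι n, P (Pi.single x (1:ℝ)) x =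
      1/3 - (1/3) * (if x.2.1 = x.2.2 then (1:ℝ) else 0)
      - (1/6) * (if x.1 = x.2.1 ∧ x.2.1 = x.2.2 then 1 else 0)
      - (1/6) * (if x.1 = x.2.1 ∧ x.2.1 = x.2.2 then 1 else 0)
      + (1/6) * (if x.1 = x.2.1 then 1 else 0)
      + (1/6) * (if x.1 = x.2.2 then 1 else 0) := by
    rintro ⟨i, j, k⟩
    simp only [P, LinearMap.coe_mk, AddHom.coe_mk, Pi.single_apply, Prod.mk.injEq, Prod.ext_iff]
    by_cases h1 : i = j <;> by_cases h2 : j = k <;> by_cases h3 : i = k <;>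
      subst_eqs <;> simp_all
  rw [Finset.sum_congr rfl fun x _ => hv x]
  rw [Fintype.sum_prod_type]
  simp only [Fintype.sum_prod_type]
  simp [Finset.sum_ite_eq, Finset.sum_ite_eq', Finset.sum_sub_distrib, Finset.sum_add_distrib,
    Finset.sum_const, Finset.card_univ, ite_and, mul_ite, mul_one, mul_zero]
  ring

/-- The projector on multilinear maps. -/
noncomputable def Pl : MM n →ₗ[ℝ] MM n := Lift ∘ₗ P ∘ₗ Coef

lemma isProj_Pl : LinearMap.IsProj (R21 n) (Pl (n := n)) := by
  constructor
  · intro c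
    apply mem_R21_of_coef <;> intro i j k <;>
      simp only [Pl, LinearMap.comp_apply, Lift_single, P_apply] <;> ring
  · intro c hc
    rw [mem_R21_iff] at hc
    have h1 : ∀ i j k : Fin n, (Coef c) (i, j, k) = - (Coef c) (i, k, j) := fun i j k =>
      hc.1 (Pi.single i 1) (Pi.single j 1) (Pi.single k 1)
    have h2 : ∀ i j k : Fin n, (Coef c) (i, j, k) + (Coef c) (j, k, i) + (Coef c) (k, i, j) = 0 :=
      fun i j k => hc.2 (Pi.single i 1) (Pi.single j 1) (Pi.single k 1)
    have key : P (Coef c) = Coef c := by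
      funext x
      obtain ⟨i, j, k⟩ := x
      rw [P_apply]
      linarith [h1 i j k, h1 j i k, h1 k j i, h2 i j k]
    show Lift (P (Coef c)) = c
    rw [key, Lift_Coef]

lemma trace_Pl : LinearMap.trace ℝ _ (Pl (n := n)) = (n:ℝ)^3/3 - (n:ℝ)/3 := by
  have hconj : (E (n := n)).conj Pl = P := by
    refine LinearMap.ext fun a => ?_
    simp only [LinearEquiv.conj_apply, LinearMap.comp_apply, LinearEquiv.coe_coe]
    show Coef (Pl (Lift a)) = P a
    show Coef (Lift (P (Coef (Lift a)))) = P a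
    rw [Coef_Lift, Coef_Lift]
  rw [← LinearMap.trace_conj' Pl (E (n := n)), hconj, trace_P]

lemma finrank_R21 (hn : 2 ≤ n) : finrank ℝ ↥(R21 n) = (n ^ 3 - n) / 3 := by
  haveI : Module.Free ℝ ↥(R21 n) := @Module.Free.of_divisionRing ℝ ↥(R21 n) _ _ _
  haveI : Module.Free ℝ ↥(LinearMap.ker (Pl (n := n))) :=
    @Module.Free.of_divisionRing ℝ ↥(LinearMap.ker (Pl (n := n))) _ _ _
  have htr := (isProj_Pl (n := n)).trace
  rw [trace_Pl] at htr
  have hle : n ≤ n ^ 3 := Nat.le_self_pow (by norm_num) n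
  have h3 : (3 * finrank ℝ ↥(R21 n) : ℝ) = ((n ^ 3 - n : ℕ) : ℝ) := by
    push_cast [Nat.cast_sub hle]
    rw [← htr]; ring
  have h3' : 3 * finrank ℝ ↥(R21 n) = n ^ 3 - n := by exact_mod_cast h3
  omega

/-- The multilinear map `c_γ`. -/
noncomputable def phi (γ : (Fin n → ℝ) →ₗ[ℝ] ℝ) : MM n :=
  (∑ k : Fin n, (MultilinearMap.mkPiAlgebra ℝ (Fin 3) ℝ).compLinearMap
      ![LinearMap.proj k, γ, LinearMap.proj k]) -
  (∑ k : Fin n, (MultilinearMap.mkPiAlgebra ℝ (Fin 3) ℝ).compLinearMap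
      ![LinearMap.proj k, LinearMap.proj k, γ])

lemma phi_apply (γ : (Fin n → ℝ) →ₗ[ℝ] ℝ) (w w₁ w₂ : Fin n → ℝ) :
    phi γ ![w, w₁, w₂] = γ w₁ * (w₂ ⬝ᵥ w) - γ w₂ * (w₁ ⬝ᵥ w) := by
  simp only [phi, MultilinearMap.sub_apply, MultilinearMap.sum_apply,
    MultilinearMap.compLinearMap_apply, MultilinearMap.mkPiAlgebra_apply, Fin.prod_univ_three,
    Matrix.cons_val_zero, Matrix.cons_val_one, Matrix.head_cons, Matrix.cons_val_two,
    Matrix.tail_cons, LinearMap.proj_apply, dotProduct]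
  rw [Finset.mul_sum, Finset.mul_sum]
  congr 1 <;> exact Finset.sum_congr rfl fun k _ => by ring

lemma phi_mem (γ : (Fin n → ℝ) →ₗ[ℝ] ℝ) : phi γ ∈ R21 n := by
  rw [mem_R21_iff]
  constructor
  · intro w w₁ w₂
    rw [phi_apply, phi_apply]
    ring
  · intro w₁ w₂ w₃
    rw [phi_apply, phi_apply, phi_apply]
    linear_combination γ w₂ * dotProduct_comm w₃ w₁ + γ w₃ * dotProduct_comm w₁ w₂ +
      γ w₁ * dotProduct_comm w₂ w₃

/-- The linear map `Φ`. -/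
noncomputable def Phi : ((Fin n → ℝ) →ₗ[ℝ] ℝ) →ₗ[ℝ] ↥(R21 n) where
  toFun γ := ⟨phi γ, phi_mem γ⟩
  map_add' γ δ := by
    apply Subtype.ext
    apply ext3
    intro w w₁ w₂
    simp only [Submodule.coe_add, MultilinearMap.add_apply, phi_apply, LinearMap.add_apply]
    ring
  map_smul' t γ := by
    apply Subtype.ext
    apply ext3
    intro w w₁ w₂
    simp only [Submodule.coe_smul, MultilinearMap.smul_apply, phi_apply, LinearMap.smul_apply,
      RingHom.id_apply, smul_eq_mul]
    ring

lemma Phi_inj (hn : 2 ≤ n) : Function.Injective (Phi (n := n)) := by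
  rw [injective_iff_map_eq_zero]
  intro γ hγ
  have hz : ∀ w w₁ w₂ : Fin n → ℝ, γ w₁ * (w₂ ⬝ᵥ w) - γ w₂ * (w₁ ⬝ᵥ w) = 0 := by
    intro w w₁ w₂
    have := congrArg (fun c : ↥(R21 n) => (↑c : MM n) ![w, w₁, w₂]) hγ
    simpa [Phi, phi_apply] using this
  have hbasis : ∀ j : Fin n, γ (Pi.single j 1) = 0 := by
    intro j
    have hcard : 1 < Fintype.card (Fin n) := by simp; omega
    obtain ⟨k, hk⟩ := Fintype.exists_ne_of_one_lt_card hcard j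
    have h := hz (Pi.single k 1) (Pi.single j 1) (Pi.single k 1)
    have d1 : (Pi.single k (1:ℝ)) ⬝ᵥ (Pi.single k 1) = 1 := by
      simp [dotProduct, Pi.single_apply]
    have d2 : (Pi.single j (1:ℝ)) ⬝ᵥ (Pi.single k 1) = 0 := by
      rw [dotProduct_single]
      simp [Pi.single_apply, hk]
    rw [d1, d2] at h
    linarith
  apply (Pi.basisFun ℝ (Fin n)).ext
  intro j
  simpa using hbasis j

end R21Aux

/-- For `W = ℝ^n` with standard inner product `⬝ᵥ`, `n ≥ 2`: (1) `dim R^{2,1} = (n³−n)/3`;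
(2) `γ ↦ c_γ`, `c_γ(w,w₁,w₂) = γ(w₁)⟨w₂,w⟩ − γ(w₂)⟨w₁,w⟩`, is an injective linear map
`W^* → R^{2,1}`; (3) the quotient `R^{2,1}/W^*` has dimension `(n³−4n)/3`. -/
theorem finrank_R21_and_quotient (n : ℕ) (hn : 2 ≤ n) :
    finrank ℝ ↥(R21 n) = (n ^ 3 - n) / 3 ∧
    ∃ Φ : ((Fin n → ℝ) →ₗ[ℝ] ℝ) →ₗ[ℝ] ↥(R21 n),
      (∀ (γ : (Fin n → ℝ) →ₗ[ℝ] ℝ) (w w₁ w₂ : Fin n → ℝ),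
        (↑(Φ γ) : MultilinearMap ℝ (fun _ : Fin 3 => (Fin n → ℝ)) ℝ) ![w, w₁, w₂]
          = γ w₁ * (w₂ ⬝ᵥ w) - γ w₂ * (w₁ ⬝ᵥ w)) ∧
      Function.Injective Φ ∧
      finrank ℝ (@HasQuotient.Quotient ↥(R21 n) (Submodule ℝ ↥(R21 n))
        (Submodule.hasQuotient (M := ↥(R21 n))) (LinearMap.range Φ)) = (n ^ 3 - 4 * n) / 3 := by
  refine ⟨R21Aux.finrank_R21 hn, R21Aux.Phi, fun γ w w₁ w₂ => R21Aux.phi_apply γ w w₁ w₂,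
    R21Aux.Phi_inj hn, ?_⟩
  have hq := Submodule.finrank_quotient_add_finrank (M := ↥(R21 n)) (LinearMap.range (R21Aux.Phi (n := n)))
  have hr : finrank ℝ ↥(LinearMap.range (R21Aux.Phi (n := n))) = n := by
    rw [LinearMap.finrank_range_of_inj (R21Aux.Phi_inj hn), Module.finrank_linearMap_self]
    simp
  rw [hr, R21Aux.finrank_R21 hn] at hq
  have h4 : 4 * n ≤ n ^ 3 := by
    calc 4 * n ≤ (n * n) * n := Nat.mul_le_mul_right _ (Nat.mul_le_mul hn hn)
    _ = n ^ 3 := by ring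
  have hle : n ≤ n ^ 3 := Nat.le_self_pow (by norm_num) n
  have hdvd : n ^ 3 % 3 = n % 3 := by
    conv_lhs => rw [Nat.pow_mod]
    have : n % 3 = 0 ∨ n % 3 = 1 ∨ n % 3 = 2 := by omega
    rcases this with h | h | h <;> rw [h]
  generalize n ^ 3 = m at *
  omega
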